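/- arXiv:2102.03677 — 2 statements merged into one kernel-verified Lean document; each statement's English description precedes it below -/
import Mathlib

section
/- Let d ≥ 1, σ ∈ (0,1/4) and C > 0. Then there exist constants λ** > 0 and C′ > 0, depending only on d, σ and C, such that the following holds. Suppose Λ is a real-valued C² function on {k ∈ ℝ^d : |k| ≥ 1} satisfying |D^m(Λ(k) − |k|²)| ≤ C·|k|^{−(2−σ)+σ|m|} for all multi-indices m with |m| ≤ 2 and all |k| ≥ 1. Then for every z ∈ ℝ^d with |z|² > λ** there exists exactly one point k₀ in the ball {k : |k − z/2| ≤ |z|/8} such that ∇Λ(k₀) = z, and this point satisfies |k₀ − z/2| ≤ C′·|z|^{−(2−2σ)}. -/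
open MeasureTheory

noncomputable section

/-- The partial derivative in the `i`-th coordinate direction. -/
def pd {d : ℕ} {F : Type*} [NormedAddCommGroup F] [NormedSpace ℝ F]
    (i : Fin d) (f : EuclideanSpace ℝ (Fin d) → F) : EuclideanSpace ℝ (Fin d) → F :=
  fun x => fderiv ℝ f x (EuclideanSpace.single i 1)

/-- The iterated partial derivative `D^m = ∂₁^{m₁} ⋯ ∂_d^{m_d}` for a multi-index `m`. -/
def Dm {d : ℕ} {F : Type*} [NormedAddCommGroup F] [NormedSpace ℝ F]
    (m : Fin d → ℕ) (f : EuclideanSpace ℝ (Fin d) → F) : EuclideanSpace ℝ (Fin d) → F :=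
  ((List.ofFn fun i : Fin d => (pd i)^[m i]).foldr (· ∘ ·) id) f

lemma foldr_comp_id {α : Type*} {n : ℕ} (g : Fin n → α → α) (h : ∀ i, g i = id) :
    (List.ofFn g).foldr (· ∘ ·) id = id := by
  induction n with
  | zero => simp
  | succ n ih =>
    rw [List.ofFn_succ, List.foldr_cons, h 0, ih _ (fun i => h i.succ)]
    rfl

lemma foldr_comp_single {α : Type*} {n : ℕ} (g : Fin n → α → α) (i : Fin n)
    (h : ∀ j, j ≠ i → g j = id) : (List.ofFn g).foldr (· ∘ ·) id = g i := by
  induction n with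
  | zero => exact i.elim0
  | succ n ih =>
    rw [List.ofFn_succ, List.foldr_cons]
    rcases Fin.eq_zero_or_eq_succ i with rfl | ⟨j, rfl⟩
    · rw [foldr_comp_id _ (fun k => h k.succ (Fin.succ_ne_zero k))]
      exact Function.comp_id _
    · rw [h 0 (Fin.succ_ne_zero j).symm,
        ih (fun k => g k.succ) j (fun k hk => h k.succ (by simpa [Fin.succ_inj] using hk))]
      exact Function.id_comp _

lemma foldr_comp_pair {α : Type*} {n : ℕ} (g : Fin n → α → α) (i j : Fin n) (hij : i < j)
    (h : ∀ k, k ≠ i → k ≠ j → g k = id) :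
    (List.ofFn g).foldr (· ∘ ·) id = g i ∘ g j := by
  induction n with
  | zero => exact i.elim0
  | succ n ih =>
    rw [List.ofFn_succ, List.foldr_cons]
    rcases Fin.eq_zero_or_eq_succ i with rfl | ⟨i', rfl⟩
    · obtain ⟨j', rfl⟩ := Fin.eq_succ_of_ne_zero (Fin.pos_iff_ne_zero.mp hij)
      rw [foldr_comp_single (fun k => g k.succ) j'
        (fun k hk => h k.succ (Fin.succ_ne_zero k) (by simpa [Fin.succ_inj] using hk))]
    · have hj0 : j ≠ 0 := Fin.pos_iff_ne_zero.mp (lt_of_le_of_lt (Fin.zero_le _) hij)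
      obtain ⟨j', rfl⟩ := Fin.eq_succ_of_ne_zero hj0
      rw [h 0 (Fin.succ_ne_zero i').symm (Fin.succ_ne_zero j').symm,
        ih (fun k => g k.succ) i' j' (by simpa [Fin.succ_lt_succ_iff] using hij)
          (fun k hk1 hk2 => h k.succ (by simpa [Fin.succ_inj] using hk1)
            (by simpa [Fin.succ_inj] using hk2))]
      exact Function.id_comp _

section DmLemmas
variable {d : ℕ} {F : Type*} [NormedAddCommGroup F] [NormedSpace ℝ F]

lemma Dm_single (i : Fin d) (f : EuclideanSpace ℝ (Fin d) → F) :
    Dm (Pi.single i 1) f = pd i f := by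
  unfold Dm
  rw [foldr_comp_single _ i (fun j hj => by simp [Pi.single_eq_of_ne hj])]
  simp

lemma Dm_double (i : Fin d) (f : EuclideanSpace ℝ (Fin d) → F) :
    Dm (Pi.single i 2) f = pd i (pd i f) := by
  unfold Dm
  rw [foldr_comp_single _ i (fun j hj => by simp [Pi.single_eq_of_ne hj])]
  simp [Function.iterate_succ', Function.comp_def]

lemma Dm_pair {i j : Fin d} (hij : i < j) (f : EuclideanSpace ℝ (Fin d) → F) :
    Dm (Pi.single i 1 + Pi.single j 1) f = pd i (pd j f) := by
  unfold Dm
  rw [foldr_comp_pair _ i j hij (fun k hk1 hk2 => by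
    simp [Pi.single_eq_of_ne hk1, Pi.single_eq_of_ne hk2])]
  simp [Pi.single_eq_of_ne hij.ne, Pi.single_eq_of_ne hij.ne', Function.comp_def]

lemma sum_single_one (i : Fin d) : (∑ k, Pi.single i (1:ℕ) k) = 1 := by
  simp [Finset.sum_pi_single']

lemma sum_single_two (i : Fin d) : (∑ k, Pi.single i (2:ℕ) k) = 2 := by
  simp [Finset.sum_pi_single']

lemma sum_single_pair {i j : Fin d} (hij : i ≠ j) :
    (∑ k, (Pi.single i 1 + Pi.single j 1 : Fin d → ℕ) k) = 2 := by
  simp [Finset.sum_add_distrib, Finset.sum_pi_single']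

lemma coord_le_norm (u : EuclideanSpace ℝ (Fin d)) (i : Fin d) : |u i| ≤ ‖u‖ := by
  have := abs_real_inner_le_norm (EuclideanSpace.single i (1:ℝ)) u
  simpa [EuclideanSpace.inner_single_left, EuclideanSpace.norm_single] using this

lemma opNorm_le_of_entries (A : EuclideanSpace ℝ (Fin d) →L[ℝ] F) {B : ℝ} (hB : 0 ≤ B)
    (h : ∀ i, ‖A (EuclideanSpace.single i 1)‖ ≤ B) : ‖A‖ ≤ d * B := by
  refine A.opNorm_le_bound (by positivity) fun u => ?_
  have hu : ∑ i, u i • EuclideanSpace.single i (1:ℝ) = u := by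
    have := (EuclideanSpace.basisFun (Fin d) ℝ).sum_repr u
    simpa using this
  have hAu : A u = ∑ i, u i • A (EuclideanSpace.single i 1) := by
    conv_lhs => rw [← hu]
    rw [map_sum]
    simp
  calc ‖A u‖ = ‖∑ i, u i • A (EuclideanSpace.single i 1)‖ := by rw [hAu]
    _ ≤ ∑ i, ‖u i • A (EuclideanSpace.single i 1)‖ := norm_sum_le _ _
    _ ≤ ∑ _i : Fin d, ‖u‖ * B := by
        refine Finset.sum_le_sum fun i _ => ?_
        rw [norm_smul]
        exact mul_le_mul (by simpa using coord_le_norm u i) (h i) (norm_nonneg _) (norm_nonneg _)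
    _ = ↑d * B * ‖u‖ := by
        simp [Finset.sum_const, Finset.card_univ]
        ring

end DmLemmas

section CalcLemmas
variable {d : ℕ}

lemma pd_pd_eq {f : EuclideanSpace ℝ (Fin d) → ℝ} {k : EuclideanSpace ℝ (Fin d)}
    (hf : ContDiffAt ℝ 2 f k) (i j : Fin d) :
    pd i (pd j f) k = fderiv ℝ (fderiv ℝ f) k (EuclideanSpace.single i 1)
      (EuclideanSpace.single j 1) := by
  have hdf : DifferentiableAt ℝ (fderiv ℝ f) k :=
    (hf.fderiv_right (m := 1) (by norm_num)).differentiableAt one_ne_zero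
  have hcl : fderiv ℝ (fun y => fderiv ℝ f y (EuclideanSpace.single j 1)) k
      = ((fderiv ℝ f k).comp
          (fderiv ℝ (fun _ : EuclideanSpace ℝ (Fin d) => EuclideanSpace.single j (1:ℝ)) k))
        + (fderiv ℝ (fderiv ℝ f) k).flip (EuclideanSpace.single j 1) :=
    fderiv_clm_apply hdf (differentiableAt_const _)
  show fderiv ℝ (fun y => fderiv ℝ f y (EuclideanSpace.single j 1)) k
      (EuclideanSpace.single i 1) = _
  rw [hcl]
  simp

end CalcLemmas


set_option maxHeartbeats 1000000 in
/-- the stationary-point lemma: if `Λ` is `C²` on `{|k| ≥ 1}` with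
`|D^m(Λ(k) − |k|²)| ≤ C|k|^{−(2−σ)+σ|m|}` for `|m| ≤ 2`, then for `|z|² > λ**` the
equation `∇Λ(k₀) = z` has exactly one solution in the ball `{|k − z/2| ≤ |z|/8}`, and it
satisfies `|k₀ − z/2| ≤ C′|z|^{−(2−2σ)}`. -/
theorem stmt7 (d : ℕ) (hd : 1 ≤ d) (σ C : ℝ)
    (hσ : 0 < σ) (hσ' : σ < 1 / 4) (hC : 0 < C) :
    ∃ lamss C' : ℝ, 0 < lamss ∧ 0 < C' ∧
      ∀ Λ : EuclideanSpace ℝ (Fin d) → ℝ,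
        ContDiffOn ℝ 2 Λ {k : EuclideanSpace ℝ (Fin d) | 1 ≤ ‖k‖} →
        (∀ m : Fin d → ℕ, (∑ i, m i) ≤ 2 →
          ∀ k : EuclideanSpace ℝ (Fin d), 1 ≤ ‖k‖ →
            |Dm m (fun k' => Λ k' - ‖k'‖ ^ 2) k|
              ≤ C * ‖k‖ ^ (-(2 - σ) + σ * ((∑ i, m i : ℕ) : ℝ))) →
        ∀ z : EuclideanSpace ℝ (Fin d), lamss < ‖z‖ ^ 2 →
          ∃ k₀ : EuclideanSpace ℝ (Fin d),
            (k₀ ∈ Metric.closedBall ((1 / 2 : ℝ) • z) (‖z‖ / 8) ∧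
              gradient Λ k₀ = z ∧
              ‖k₀ - (1 / 2 : ℝ) • z‖ ≤ C' * ‖z‖ ^ (-(2 - 2 * σ))) ∧
            ∀ k' : EuclideanSpace ℝ (Fin d),
              k' ∈ Metric.closedBall ((1 / 2 : ℝ) • z) (‖z‖ / 8) →
              gradient Λ k' = z → k' = k₀ := by
  classical
  set D : ℝ := (d : ℝ) with hDdef
  have hD1 : 1 ≤ D := by rw [hDdef]; exact_mod_cast hd
  set L0 : ℝ := 8 * (D ^ 2 + 1) * (C + 1) with hL0def
  have hL0pos : 0 < L0 := by positivity
  refine ⟨L0 ^ 2, (D * C / 2) * (3 / 8 : ℝ) ^ (-(2 - 2 * σ)), by positivity, by positivity, ?_⟩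
  intro Λ hΛ hbound z hz
  set R : EuclideanSpace ℝ (Fin d) → ℝ := fun k' => Λ k' - ‖k'‖ ^ 2 with hRdef
  have hzL0 : L0 < ‖z‖ := by nlinarith [norm_nonneg z]
  have hzpos : 0 < ‖z‖ := lt_trans hL0pos hzL0
  have hz8 : (8 : ℝ) < ‖z‖ := by nlinarith
  set c : EuclideanSpace ℝ (Fin d) := (1 / 2 : ℝ) • z with hcdef
  set r : ℝ := ‖z‖ / 8 with hrdef
  set s : Set (EuclideanSpace ℝ (Fin d)) := Metric.closedBall c r with hsdef
  have hnormc : ‖c‖ = ‖z‖ / 2 := by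
    rw [hcdef, norm_smul]
    simp [abs_of_pos]
    ring
  have hks : ∀ k ∈ s, 3 * ‖z‖ / 8 ≤ ‖k‖ := by
    intro k hk
    have h1 : ‖k - c‖ ≤ r := by rwa [Metric.mem_closedBall, dist_eq_norm] at hk
    have h2 : ‖c‖ - ‖k‖ ≤ ‖c - k‖ := norm_sub_norm_le c k
    rw [norm_sub_rev] at h2
    rw [hnormc] at h2
    rw [hrdef] at h1
    linarith
  have hk1 : ∀ k ∈ s, 1 < ‖k‖ := by
    intro k hk
    have := hks k hk
    nlinarith
  -- smoothness of R on s
  have hU : IsOpen {k : EuclideanSpace ℝ (Fin d) | 1 < ‖k‖} :=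
    isOpen_lt continuous_const continuous_norm
  have hRC : ∀ k ∈ s, ContDiffAt ℝ 2 R k := by
    intro k hk
    have hsub : {k : EuclideanSpace ℝ (Fin d) | 1 < ‖k‖} ⊆ {k | 1 ≤ ‖k‖} := by
      intro x hx
      simp only [Set.mem_setOf_eq] at *
      exact hx.le
    have hΛk : ContDiffAt ℝ 2 Λ k :=
      (hΛ.mono hsub).contDiffAt (hU.mem_nhds (hk1 k hk))
    exact hΛk.sub ((contDiff_norm_sq ℝ (E := EuclideanSpace ℝ (Fin d))).contDiffAt)
  have hRdiff : ∀ k ∈ s, DifferentiableAt ℝ R k := fun k hk =>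
    (hRC k hk).differentiableAt (by norm_num)
  have hdfdiff : ∀ k ∈ s, DifferentiableAt ℝ (fderiv ℝ R) k := fun k hk =>
    ((hRC k hk).fderiv_right (m := 1) (by norm_num)).differentiableAt one_ne_zero
  -- exponents
  have hexp1 : -(2 - σ) + σ * ((1 : ℕ) : ℝ) = -(2 - 2 * σ) := by push_cast; ring
  have hexp2neg : -(2 - 2 * σ) ≤ 0 := by linarith
  have hbase : (1 : ℝ) ≤ 3 * ‖z‖ / 8 := by nlinarith
  have hbasepos : (0 : ℝ) < 3 * ‖z‖ / 8 := by linarith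
  -- first derivative bound
  have hg1 : ∀ k ∈ s, ‖fderiv ℝ R k‖ ≤ D * (C * (3 * ‖z‖ / 8) ^ (-(2 - 2 * σ))) := by
    intro k hk
    refine opNorm_le_of_entries _ (by positivity) (fun i => ?_)
    have h1 : fderiv ℝ R k (EuclideanSpace.single i 1) = Dm (Pi.single i 1) R k := by
      rw [Dm_single]; rfl
    rw [Real.norm_eq_abs, h1]
    have h2 := hbound (Pi.single i 1) (by rw [sum_single_one]; norm_num) k (hk1 k hk).le
    rw [sum_single_one, hexp1] at h2
    refine le_trans h2 ?_
    have h3 : ‖k‖ ^ (-(2 - 2 * σ)) ≤ (3 * ‖z‖ / 8) ^ (-(2 - 2 * σ)) :=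
      Real.rpow_le_rpow_of_nonpos hbasepos (hks k hk) hexp2neg
    exact mul_le_mul_of_nonneg_left h3 hC.le
  -- second derivative entries
  have hexp2 : -(2 - σ) + σ * ((2 : ℕ) : ℝ) = -(2 - 3 * σ) := by push_cast; ring
  have hexp3neg : -(2 - 3 * σ) ≤ 0 := by linarith
  have hentry2 : ∀ k ∈ s, ∀ i j : Fin d,
      |fderiv ℝ (fderiv ℝ R) k (EuclideanSpace.single i 1) (EuclideanSpace.single j 1)|
        ≤ C * (3 * ‖z‖ / 8) ^ (-(2 - 3 * σ)) := by
    intro k hk i j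
    have hkb : ‖k‖ ^ (-(2 - 3 * σ)) ≤ (3 * ‖z‖ / 8) ^ (-(2 - 3 * σ)) :=
      Real.rpow_le_rpow_of_nonpos hbasepos (hks k hk) hexp3neg
    have key : ∀ i' j' : Fin d, i' ≤ j' →
        |fderiv ℝ (fderiv ℝ R) k (EuclideanSpace.single i' 1) (EuclideanSpace.single j' 1)|
          ≤ C * (3 * ‖z‖ / 8) ^ (-(2 - 3 * σ)) := by
      intro i' j' hij
      rw [← pd_pd_eq (hRC k hk) i' j']
      rcases eq_or_lt_of_le hij with rfl | hlt
      · have h1 : pd i' (pd i' R) k = Dm (Pi.single i' 2) R k := by rw [Dm_double]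
        rw [h1]
        have h2 := hbound (Pi.single i' 2) (by rw [sum_single_two]) k (hk1 k hk).le
        rw [sum_single_two, hexp2] at h2
        exact le_trans h2 (mul_le_mul_of_nonneg_left hkb hC.le)
      · have h1 : pd i' (pd j' R) k = Dm (Pi.single i' 1 + Pi.single j' 1) R k := by
          rw [Dm_pair hlt]
        rw [h1]
        have h2 := hbound (Pi.single i' 1 + Pi.single j' 1)
          (by rw [sum_single_pair hlt.ne]) k (hk1 k hk).le
        rw [sum_single_pair hlt.ne, hexp2] at h2
        exact le_trans h2 (mul_le_mul_of_nonneg_left hkb hC.le)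
    rcases le_total i j with hij | hij
    · exact key i j hij
    · have hsymm := (hRC k hk).isSymmSndFDerivAt (by simp [minSmoothness_of_isRCLikeNormedField])
        (EuclideanSpace.single i 1) (EuclideanSpace.single j 1)
      rw [hsymm]
      exact key j i hij
  -- second derivative operator norm ≤ 1 on s
  have hg2 : ∀ k ∈ s, ‖fderiv ℝ (fderiv ℝ R) k‖ ≤ 1 := by
    intro k hk
    have h1 : ‖fderiv ℝ (fderiv ℝ R) k‖
        ≤ D * (D * (C * (3 * ‖z‖ / 8) ^ (-(2 - 3 * σ)))) := by
      refine opNorm_le_of_entries _ (by positivity) (fun i => ?_)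
      refine opNorm_le_of_entries _ (by positivity) (fun j => ?_)
      rw [Real.norm_eq_abs]
      exact hentry2 k hk i j
    refine le_trans h1 ?_
    have h2 : (3 * ‖z‖ / 8) ^ (-(2 - 3 * σ)) ≤ (3 * ‖z‖ / 8) ^ (-1 : ℝ) :=
      Real.rpow_le_rpow_of_exponent_le hbase (by linarith)
    rw [Real.rpow_neg_one] at h2
    have h3 : D * (D * (C * (3 * ‖z‖ / 8) ^ (-(2 - 3 * σ)))) ≤ D * (D * (C * (3 * ‖z‖ / 8)⁻¹)) := by
      have : (0:ℝ) ≤ D := by linarith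
      gcongr
    refine le_trans h3 ?_
    have h4 : D * (D * (C * (3 * ‖z‖ / 8)⁻¹)) = (D * D * C) / (3 * ‖z‖ / 8) := by ring
    rw [h4, div_le_one hbasepos]
    nlinarith
  -- the fixed point map
  set g : EuclideanSpace ℝ (Fin d) → EuclideanSpace ℝ (Fin d) :=
    fun k => (InnerProductSpace.toDual ℝ (EuclideanSpace ℝ (Fin d))).symm (fderiv ℝ R k)
    with hgdef
  set T : EuclideanSpace ℝ (Fin d) → EuclideanSpace ℝ (Fin d) :=
    fun k => (1 / 2 : ℝ) • (z - g k) with hTdef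
  have hgnorm : ∀ k, ‖g k‖ = ‖fderiv ℝ R k‖ := by
    intro k
    rw [hgdef]
    exact LinearIsometryEquiv.norm_map _ _
  have hgsub : ∀ x y, ‖g x - g y‖ = ‖fderiv ℝ R x - fderiv ℝ R y‖ := by
    intro x y
    have h0 : g x - g y
        = (InnerProductSpace.toDual ℝ (EuclideanSpace ℝ (Fin d))).symm
            (fderiv ℝ R x - fderiv ℝ R y) := (map_sub _ _ _).symm
    rw [h0]
    exact LinearIsometryEquiv.norm_map _ _
  -- gradient identity
  have hgrad : ∀ k ∈ s, gradient Λ k = g k + (2 : ℝ) • k := by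
    intro k hk
    have h1 : HasFDerivAt (fun x : EuclideanSpace ℝ (Fin d) => ‖x‖ ^ 2)
        (2 • (innerSL ℝ k)) k := (hasStrictFDerivAt_norm_sq k).hasFDerivAt
    have h2 : HasFDerivAt R (fderiv ℝ R k) k := (hRdiff k hk).hasFDerivAt
    have h3 : HasFDerivAt Λ (fderiv ℝ R k + 2 • (innerSL ℝ k)) k := by
      have h4 := h2.add h1
      have h5 : (R + fun x : EuclideanSpace ℝ (Fin d) => ‖x‖ ^ 2) = Λ := by
        funext x
        show Λ x - ‖x‖ ^ 2 + ‖x‖ ^ 2 = Λ x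
        ring
      rwa [h5] at h4
    show (InnerProductSpace.toDual ℝ (EuclideanSpace ℝ (Fin d))).symm (fderiv ℝ Λ k) = _
    rw [h3.fderiv, map_add]
    congr 1
    have h6 : (2 • (innerSL ℝ k) : EuclideanSpace ℝ (Fin d) →L[ℝ] ℝ)
        = InnerProductSpace.toDual ℝ (EuclideanSpace ℝ (Fin d)) ((2:ℝ) • k) := by
      ext v
      simp only [ContinuousLinearMap.smul_apply, innerSL_apply_apply,
        InnerProductSpace.toDual_apply_apply, two_smul, ContinuousLinearMap.add_apply,
        inner_add_left]
    rw [h6, LinearIsometryEquiv.symm_apply_apply]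
  have hTk : ∀ k, T k = (1 / 2 : ℝ) • (z - g k) := fun _ => rfl
  have heq : ∀ k ∈ s, (gradient Λ k = z ↔ T k = k) := by
    intro k hk
    rw [hgrad k hk]
    constructor
    · intro h
      rw [hTk]
      have h' : z - g k = (2 : ℝ) • k := by
        rw [← h]; module
      rw [h']
      module
    · intro h
      rw [hTk] at h
      have h2 : (2 : ℝ) • ((1 / 2 : ℝ) • (z - g k)) = (2 : ℝ) • k := by rw [h]
      have h3 : z - g k = (2 : ℝ) • k := by
        rw [← h2]; module
      rw [← h3]
      module
  -- invariance bound
  have hTc : ∀ k, ‖T k - c‖ = (1 / 2 : ℝ) * ‖g k‖ := by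
    intro k
    have h1 : T k - c = (1 / 2 : ℝ) • (-(g k)) := by
      rw [hTk, hcdef]; module
    rw [h1, norm_smul]
    simp
  have hgb : ∀ k ∈ s, ‖g k‖ ≤ D * C * (3 * ‖z‖ / 8) ^ (-(2 - 2 * σ)) := by
    intro k hk
    rw [hgnorm]
    refine le_trans (hg1 k hk) (le_of_eq ?_)
    ring
  have hinv : ∀ k ∈ s, ‖T k - c‖ ≤ (D * C / 2) * (3 * ‖z‖ / 8) ^ (-(2 - 2 * σ)) := by
    intro k hk
    rw [hTc]
    have := hgb k hk
    nlinarith [Real.rpow_nonneg hbasepos.le (-(2 - 2 * σ))]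
  have hsmall : (D * C / 2) * (3 * ‖z‖ / 8) ^ (-(2 - 2 * σ)) ≤ r := by
    have h2 : (3 * ‖z‖ / 8) ^ (-(2 - 2 * σ)) ≤ (3 * ‖z‖ / 8) ^ (-1 : ℝ) :=
      Real.rpow_le_rpow_of_exponent_le hbase (by linarith)
    rw [Real.rpow_neg_one] at h2
    have h3 : (D * C / 2) * (3 * ‖z‖ / 8) ^ (-(2 - 2 * σ)) ≤ (D * C / 2) * (3 * ‖z‖ / 8)⁻¹ := by
      have hDC : (0:ℝ) ≤ D * C / 2 := by positivity
      exact mul_le_mul_of_nonneg_left h2 hDC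
    refine le_trans h3 ?_
    rw [hrdef]
    rw [show (D * C / 2) * (3 * ‖z‖ / 8)⁻¹ = (D * C / 2) / (3 * ‖z‖ / 8) from by ring]
    rw [div_le_div_iff₀ hbasepos (by norm_num : (0:ℝ) < 8)]
    nlinarith
  have hmaps : Set.MapsTo T s s := by
    intro k hk
    rw [hsdef, Metric.mem_closedBall, dist_eq_norm]
    exact le_trans (hinv k hk) hsmall
  -- contraction
  have hlip : ∀ x ∈ s, ∀ y ∈ s, dist (T x) (T y) ≤ (1 / 2 : ℝ) * dist x y := by
    intro x hx y hy
    rw [dist_eq_norm, dist_eq_norm]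
    have h1 : T x - T y = (1 / 2 : ℝ) • (g y - g x) := by
      rw [hTk, hTk]; module
    rw [h1, norm_smul, Real.norm_eq_abs]
    have habs : |(1:ℝ)/2| = 1/2 := by norm_num
    rw [habs]
    have h2 : ‖g y - g x‖ ≤ ‖x - y‖ := by
      rw [hgsub, norm_sub_rev (fderiv ℝ R y)]
      have := Convex.norm_image_sub_le_of_norm_fderiv_le (f := fderiv ℝ R) (s := s)
        hdfdiff hg2 (convex_closedBall c r) hy hx
      simpa using this
    nlinarith [norm_nonneg (g y - g x), norm_nonneg (x - y)]
  have hlipOn : LipschitzOnWith (1/2 : NNReal) T s := by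
    refine LipschitzOnWith.of_dist_le_mul (fun x hx y hy => ?_)
    have := hlip x hx y hy
    rw [show ((1/2 : NNReal) : ℝ) = 1/2 by norm_num]
    exact this
  have hhalf : (1/2 : NNReal) < 1 := by
    have h0 : ((1/2 : NNReal) : ℝ) < ((1 : NNReal) : ℝ) := by push_cast; norm_num
    exact_mod_cast h0
  have hcontr : ContractingWith (1/2 : NNReal) (hmaps.restrict T s s) :=
    ⟨hhalf, (hmaps.lipschitzOnWith_iff_restrict.mp hlipOn)⟩
  have hsc : IsComplete s := Metric.isClosed_closedBall.isComplete
  have hcs : c ∈ s := Metric.mem_closedBall_self (by rw [hrdef]; positivity)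
  obtain ⟨k₀, hk₀s, hfix, -, -⟩ :=
    ContractingWith.exists_fixedPoint' hsc hmaps hcontr hcs (edist_ne_top _ _)
  refine ⟨k₀, ⟨hk₀s, (heq k₀ hk₀s).mpr hfix, ?_⟩, ?_⟩
  · have h1 : ‖k₀ - c‖ = ‖T k₀ - c‖ := by rw [hfix]
    rw [h1]
    refine le_trans (hinv k₀ hk₀s) (le_of_eq ?_)
    have h2 : (3 * ‖z‖ / 8 : ℝ) = (3/8) * ‖z‖ := by ring
    rw [h2, Real.mul_rpow (by norm_num) hzpos.le]
    ring
  · intro k' hk's hgk'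
    have hfix' : T k' = k' := (heq k' hk's).mp hgk'
    have h1 := hlip k' hk's k₀ hk₀s
    rw [hfix, hfix'] at h1
    have h2 : dist k' k₀ = 0 := by nlinarith [dist_nonneg (x := k') (y := k₀)]
    exact dist_eq_zero.mp h2
end
end

section
/- Let h : [0,∞) → [0,∞) be a measurable function and C₁, C₂ ≥ 0 constants such that h(t) ≤ C₁t² + C₂ for all t ≥ 0. Suppose there exist c > 0 and T₀ > 0 such that (2/T) ∫₀^∞ e^{−2t/T} h(t) dt ≥ c·T² for all T > T₀. Then there exist c′ > 0 and T₀′ > 0 such that (1/T) ∫₀^T h(t) dt ≥ c′·T² for all T > T₀′. -/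
open MeasureTheory

noncomputable section

/-- Value of the tail exponential integral. -/
lemma tail_exp_integral (S T : ℝ) (hT : 0 < T) :
    ∫ t in Set.Ioi S, Real.exp (-(1/T) * t) = T * Real.exp (-(1/T) * S) := by
  have hderiv : ∀ x ∈ Set.Ici S,
      HasDerivAt (fun t => -T * Real.exp (-(1/T) * t)) (Real.exp (-(1/T) * x)) x := by
    intro x _
    have h1 : HasDerivAt (fun t : ℝ => -(1/T) * t) (-(1/T)) x := by
      simpa using (hasDerivAt_id x).const_mul (-(1/T))
    have h2 := (h1.exp).const_mul (-T)
    refine h2.congr_deriv ?_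
    rw [mul_comm (Real.exp _), ← mul_assoc, neg_mul_neg, mul_one_div_cancel hT.ne', one_mul]
  have hint : IntegrableOn (fun t => Real.exp (-(1/T) * t)) (Set.Ioi S) :=
    exp_neg_integrableOn_Ioi S (by positivity)
  have htend : Filter.Tendsto (fun t => -T * Real.exp (-(1/T) * t)) Filter.atTop (nhds 0) := by
    have h0 : Filter.Tendsto (fun t : ℝ => -(1/T) * t) Filter.atTop Filter.atBot :=
      (Filter.tendsto_const_mul_atBot_of_neg (neg_lt_zero.2 (by positivity))).2
        Filter.tendsto_id
    have h2 : Filter.Tendsto (fun t : ℝ => Real.exp (-(1/T) * t)) Filter.atTop (nhds 0) :=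
      Real.tendsto_exp_atBot.comp h0
    simpa using h2.const_mul (-T)
  have := integral_Ioi_of_hasDerivAt_of_tendsto' hderiv hint htend
  rw [this]; ring

/-- Under a ballistic upper bound `h(t) ≤ C₁t² + C₂`, an Abel-averaged
ballistic lower bound implies a Cesàro-averaged ballistic lower bound. -/
theorem stmt9 (h : ℝ → ℝ) (hmeas : Measurable h)
    (hnonneg : ∀ t : ℝ, 0 ≤ t → 0 ≤ h t)
    (C₁ C₂ : ℝ) (hC₁ : 0 ≤ C₁) (hC₂ : 0 ≤ C₂)
    (hupper : ∀ t : ℝ, 0 ≤ t → h t ≤ C₁ * t ^ 2 + C₂)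
    (c T₀ : ℝ) (hc : 0 < c) (hT₀ : 0 < T₀)
    (hlower : ∀ T : ℝ, T₀ < T →
      c * T ^ 2 ≤ (2 / T) * ∫ t in Set.Ioi (0 : ℝ), Real.exp (-2 * t / T) * h t) :
    ∃ c' T₀' : ℝ, 0 < c' ∧ 0 < T₀' ∧ ∀ T : ℝ, T₀' < T →
      c' * T ^ 2 ≤ (1 / T) * ∫ t in (0 : ℝ)..T, h t := by
  set K : ℝ := max 1 (Real.log (20 * (C₁ + C₂ + 1) / c)) with hKdef
  have hK1 : (1:ℝ) ≤ K := le_max_left _ _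
  have hKpos : 0 < K := lt_of_lt_of_le one_pos hK1
  have hD : (0:ℝ) < 20 * (C₁ + C₂ + 1) / c := by positivity
  have hKexp : Real.exp (-K) ≤ c / (20 * (C₁ + C₂ + 1)) := by
    have h1 : Real.exp (-K) ≤ Real.exp (-(Real.log (20 * (C₁ + C₂ + 1) / c))) :=
      Real.exp_le_exp.2 (neg_le_neg (le_max_right _ _))
    have h2 : Real.exp (-(Real.log (20 * (C₁ + C₂ + 1) / c))) = c / (20 * (C₁ + C₂ + 1)) := by
      rw [Real.exp_neg, Real.exp_log hD, inv_div]
    linarith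
  refine ⟨c / (4 * K ^ 3), K * max T₀ 1, by positivity, by positivity, ?_⟩
  intro S hS
  set T : ℝ := S / K with hTdef
  have hMpos : (0:ℝ) < max T₀ 1 := lt_of_lt_of_le one_pos (le_max_right _ _)
  have hSpos : 0 < S := lt_trans (by positivity) hS
  have hTgt : max T₀ 1 < T := by
    rw [hTdef, lt_div_iff₀ hKpos]
    linarith [hS]
  have hTT₀ : T₀ < T := lt_of_le_of_lt (le_max_left _ _) hTgt
  have hT1 : (1:ℝ) ≤ T := le_of_lt (lt_of_le_of_lt (le_max_right _ _) hTgt)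
  have hTpos : (0:ℝ) < T := lt_of_lt_of_le one_pos hT1
  have hST : S = K * T := by
    rw [hTdef, mul_div_cancel₀ _ (ne_of_gt hKpos)]
  set g : ℝ → ℝ := fun t => Real.exp (-2 * t / T) * h t with hgdef
  have hI : c * T ^ 3 / 2 ≤ ∫ t in Set.Ioi (0:ℝ), g t := by
    have h1 := hlower T hTT₀
    have h2 := mul_le_mul_of_nonneg_left h1 (le_of_lt (half_pos hTpos))
    calc c * T ^ 3 / 2 = T / 2 * (c * T ^ 2) := by ring
      _ ≤ T / 2 * ((2 / T) * ∫ t in Set.Ioi (0:ℝ), g t) := h2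
      _ = ∫ t in Set.Ioi (0:ℝ), g t := by field_simp
  have hI0 : 0 < ∫ t in Set.Ioi (0:ℝ), g t := lt_of_lt_of_le (by positivity) hI
  have hint : IntegrableOn g (Set.Ioi 0) := by
    by_contra hcon
    rw [integral_undef hcon] at hI0
    exact lt_irrefl _ hI0
  have hhint : IntegrableOn h (Set.Ioc 0 S) := by
    apply Integrable.mono' (integrable_const (C₁ * S ^ 2 + C₂)) hmeas.aestronglyMeasurable
    filter_upwards [ae_restrict_mem measurableSet_Ioc] with t ht
    rw [Real.norm_eq_abs, abs_of_nonneg (hnonneg t ht.1.le)]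
    refine le_trans (hupper t ht.1.le) ?_
    have ht2 : t ^ 2 ≤ S ^ 2 := pow_le_pow_left₀ ht.1.le ht.2 2
    linarith [mul_le_mul_of_nonneg_left ht2 hC₁]
  have hg_Ioc : IntegrableOn g (Set.Ioc 0 S) := hint.mono_set Set.Ioc_subset_Ioi_self
  have hg_IoiS : IntegrableOn g (Set.Ioi S) := hint.mono_set (Set.Ioi_subset_Ioi hSpos.le)
  set φ : ℝ → ℝ := fun t => 5 * (C₁ + C₂) * T ^ 2 * Real.exp (-(1/T) * t) with hφdef
  have hφint : IntegrableOn φ (Set.Ioi S) :=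
    (exp_neg_integrableOn_Ioi S (by positivity : (0:ℝ) < 1/T)).const_mul _
  have hφval : ∫ t in Set.Ioi S, φ t = 5 * (C₁ + C₂) * T ^ 3 * Real.exp (-K) := by
    rw [hφdef]
    rw [integral_const_mul, tail_exp_integral S T hTpos]
    have hKS : -(1/T) * S = -K := by
      rw [hST]; field_simp
    rw [hKS]; ring
  -- pointwise tail bound
  have hpt : ∀ t ∈ Set.Ioi S, g t ≤ φ t := by
    intro t ht
    have ht0 : 0 < t := lt_trans hSpos ht
    set E : ℝ := Real.exp (-(1/T) * t) with hEdef
    set X : ℝ := Real.exp (t / (2*T)) with hXdef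
    have hE : Real.exp (-2 * t / T) = E * E := by
      rw [hEdef, ← Real.exp_add]; ring_nf
    have hEpos : 0 < E := Real.exp_pos _
    have hXpos : 0 < X := Real.exp_pos _
    have e1 : t / (2 * T) + 1 ≤ X := Real.add_one_le_exp _
    have e2 : E * X * X = 1 := by
      rw [hEdef, hXdef, ← Real.exp_add, ← Real.exp_add]
      have harg : -(1/T) * t + t / (2*T) + t / (2*T) = 0 := by field_simp; ring
      rw [harg, Real.exp_zero]
    have ha : 0 ≤ t / (2*T) := by positivity
    have hb : t / (2*T) ≤ X := by linarith
    have hss : (t/(2*T)) * (t/(2*T)) ≤ X * X := mul_self_le_mul_self ha hb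
    have ht2 : t ^ 2 ≤ 4 * T ^ 2 * (X * X) := by
      have h3 := mul_le_mul_of_nonneg_left hss (by positivity : (0:ℝ) ≤ 4 * T ^ 2)
      have heq : 4 * T ^ 2 * ((t/(2*T)) * (t/(2*T))) = t ^ 2 := by
        field_simp; ring
      rw [heq] at h3
      linarith
    have hX1 : 1 ≤ X := by linarith
    have hXX1 : 1 ≤ X * X := by
      have := mul_le_mul hX1 hX1 zero_le_one hXpos.le
      linarith
    have hT2 : 1 ≤ T ^ 2 := by
      have h9 := mul_le_mul hT1 hT1 zero_le_one hTpos.le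
      have h10 : T * T = T ^ 2 := (sq T).symm
      linarith
    have hTXX : 1 ≤ T ^ 2 * (X * X) := by
      have h9 := mul_le_mul hT2 hXX1 zero_le_one (le_trans zero_le_one hT2)
      linarith
    have hclaim : t ^ 2 + 1 ≤ 5 * T ^ 2 * (X * X) := by linarith
    -- key : (t^2+1) * E ≤ 5 T^2
    have key : (t ^ 2 + 1) * E ≤ 5 * T ^ 2 := by
      have h4 := mul_le_mul_of_nonneg_right hclaim hEpos.le
      have h5 : 5 * T ^ 2 * (X * X) * E = 5 * T ^ 2 := by
        have hr : 5 * T ^ 2 * (X * X) * E = 5 * T ^ 2 * (E * X * X) := by ring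
        rw [hr, e2, mul_one]
      linarith
    have hht : h t ≤ (C₁ + C₂) * (t ^ 2 + 1) := by
      refine le_trans (hupper t ht0.le) ?_
      have := mul_nonneg hC₂ (sq_nonneg t)
      linarith
    have hg_le : g t ≤ (C₁ + C₂) * E * ((t ^ 2 + 1) * E) := by
      rw [hgdef]
      simp only
      rw [hE]
      have h6 : E * E * h t ≤ E * E * ((C₁ + C₂) * (t ^ 2 + 1)) :=
        mul_le_mul_of_nonneg_left hht (by positivity)
      linarith [h6]
    refine le_trans hg_le ?_
    have h7 := mul_le_mul_of_nonneg_left key (by positivity : (0:ℝ) ≤ (C₁ + C₂) * E)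
    rw [hφdef]
    simp only
    linarith [h7]
  have htail : ∫ t in Set.Ioi S, g t ≤ 5 * (C₁ + C₂) * T ^ 3 * Real.exp (-K) := by
    rw [← hφval]
    exact setIntegral_mono_on hg_IoiS hφint measurableSet_Ioi hpt
  have hsplit : (∫ t in Set.Ioi (0:ℝ), g t)
      = (∫ t in Set.Ioc 0 S, g t) + ∫ t in Set.Ioi S, g t := by
    have hu := setIntegral_union (Set.Ioc_disjoint_Ioi (le_refl S)) measurableSet_Ioi
      hg_Ioc hg_IoiS
    rw [Set.Ioc_union_Ioi_eq_Ioi hSpos.le] at hu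
    exact hu
  have htail' : 5 * (C₁ + C₂) * T ^ 3 * Real.exp (-K) ≤ c * T ^ 3 / 4 := by
    have h1 : 5 * (C₁ + C₂) * T ^ 3 * Real.exp (-K)
        ≤ 5 * (C₁ + C₂) * T ^ 3 * (c / (20 * (C₁ + C₂ + 1))) :=
      mul_le_mul_of_nonneg_left hKexp (by positivity)
    refine le_trans h1 ?_
    have hr : (C₁ + C₂) / (C₁ + C₂ + 1) ≤ 1 := by
      rw [div_le_one (by positivity)]; linarith
    calc 5 * (C₁ + C₂) * T ^ 3 * (c / (20 * (C₁ + C₂ + 1)))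
        = (c * T ^ 3 / 4) * ((C₁ + C₂) / (C₁ + C₂ + 1)) := by
          field_simp; ring
      _ ≤ (c * T ^ 3 / 4) * 1 := mul_le_mul_of_nonneg_left hr (by positivity)
      _ = c * T ^ 3 / 4 := mul_one _
  have hhead : c * T ^ 3 / 4 ≤ ∫ t in Set.Ioc 0 S, g t := by
    linarith [htail, htail', hI, hsplit]
  have hmono : ∫ t in Set.Ioc 0 S, g t ≤ ∫ t in Set.Ioc 0 S, h t := by
    refine setIntegral_mono_on hg_Ioc hhint measurableSet_Ioc ?_
    intro t ht
    rw [hgdef]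
    simp only
    have h1 : Real.exp (-2 * t / T) ≤ 1 := by
      rw [Real.exp_le_one_iff]
      apply div_nonpos_of_nonpos_of_nonneg <;> linarith [ht.1.le, hTpos.le]
    exact mul_le_of_le_one_left (hnonneg t ht.1.le) h1
  have hfinal : c * T ^ 3 / 4 ≤ ∫ t in (0:ℝ)..S, h t := by
    rw [intervalIntegral.integral_of_le hSpos.le]
    exact le_trans hhead hmono
  have heq : c / (4 * K ^ 3) * S ^ 2 = (1 / S) * (c * T ^ 3 / 4) := by
    rw [hTdef]; field_simp
  rw [heq]
  exact mul_le_mul_of_nonneg_left hfinal (by positivity)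
end
end
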